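/- The function a₁(x) = (1/1152)·[ (145 + 249x² − 9x⁴)/(x²−1)³ − 7x(x²−6)/((x²−1)^{3/2}·ζ(x)^{3/2}) − 455/(4·ζ(x)³) ] tends to −249/28800 as x → 1 from the right, where ζ(x) = ( (3/4)·( x·√(x²−1) − arcosh x ) )^{2/3}. -/

import Mathlib

set_option maxHeartbeats 1000000


open Real Filter

/-- The inverse hyperbolic cosine, `arcosh x = log (x + √(x² - 1))`. -/
noncomputable def arcosh (x : ℝ) : ℝ := Real.log (x + Real.sqrt (x ^ 2 - 1))

/-- The variable `ζ(x) = ((3/4)(x√(x²-1) - arcosh x))^{2/3}` for `x ≥ 1`. -/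
noncomputable def zeta (x : ℝ) : ℝ :=
  ((3 / 4) * (x * Real.sqrt (x ^ 2 - 1) - _root_.arcosh x)) ^ ((2 : ℝ) / 3)

/-- The coefficient function
`a₁(x) = (1/1152)·[(145+249x²-9x⁴)/(x²-1)³ - 7x(x²-6)/((x²-1)^{3/2}ζ^{3/2}) - 455/(4ζ³)]`. -/
noncomputable def a1 (x : ℝ) : ℝ :=
  (1 / 1152) *
    ((145 + 249 * x ^ 2 - 9 * x ^ 4) / (x ^ 2 - 1) ^ 3 -
      7 * x * (x ^ 2 - 6) / ((x ^ 2 - 1) ^ ((3 : ℝ) / 2) * zeta x ^ ((3 : ℝ) / 2)) -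
      455 / (4 * zeta x ^ 3))

noncomputable def Ff (x : ℝ) : ℝ := x * Real.sqrt (x ^ 2 - 1) - _root_.arcosh x

lemma sqrt_hasDeriv {x : ℝ} (hx : 1 < x) :
    HasDerivAt (fun y => Real.sqrt (y ^ 2 - 1)) (x / Real.sqrt (x ^ 2 - 1)) x := by
  have h0 : (0:ℝ) < x ^ 2 - 1 := by nlinarith
  have hs : 0 < Real.sqrt (x ^ 2 - 1) := Real.sqrt_pos.2 h0
  have h1 : HasDerivAt (fun y : ℝ => y ^ 2 - 1) (2 * x) x := by
    simpa using ((hasDerivAt_pow 2 x).sub_const 1)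
  have h2 := h1.sqrt h0.ne'
  convert h2 using 1
  field_simp

lemma Ff_hasDeriv {x : ℝ} (hx : 1 < x) :
    HasDerivAt Ff (2 * Real.sqrt (x ^ 2 - 1)) x := by
  have h0 : (0:ℝ) < x ^ 2 - 1 := by nlinarith
  have hs : 0 < Real.sqrt (x ^ 2 - 1) := Real.sqrt_pos.2 h0
  have hsq : Real.sqrt (x ^ 2 - 1) ^ 2 = x ^ 2 - 1 := Real.sq_sqrt h0.le
  have hd1 := sqrt_hasDeriv hx
  have hmul : HasDerivAt (fun y => y * Real.sqrt (y ^ 2 - 1))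
      (1 * Real.sqrt (x ^ 2 - 1) + x * (x / Real.sqrt (x ^ 2 - 1))) x :=
    (hasDerivAt_id x).mul hd1
  have hpos : (0:ℝ) < x + Real.sqrt (x ^ 2 - 1) := by linarith
  have hinner : HasDerivAt (fun y => y + Real.sqrt (y ^ 2 - 1))
      (1 + x / Real.sqrt (x ^ 2 - 1)) x := (hasDerivAt_id x).add hd1
  have hlog : HasDerivAt _root_.arcosh
      ((1 + x / Real.sqrt (x ^ 2 - 1)) / (x + Real.sqrt (x ^ 2 - 1))) x :=
    hinner.log hpos.ne'
  have h := hmul.sub hlog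
  convert h using 1
  · exact rfl
  · exact rfl
  · exact rfl
  have e1 : (1 + x / Real.sqrt (x ^ 2 - 1)) / (x + Real.sqrt (x ^ 2 - 1))
      = 1 / Real.sqrt (x ^ 2 - 1) := by
    rw [div_eq_div_iff hpos.ne' hs.ne']
    field_simp
    ring
  rw [e1]
  field_simp
  linarith [hsq]

noncomputable def Tf (x : ℝ) : ℝ :=
  (2/3) * Real.sqrt (x^2-1) ^ 3 - (1/5) * Real.sqrt (x^2-1) ^ 5
    + (3/28) * Real.sqrt (x^2-1) ^ 7 - (5/72) * Real.sqrt (x^2-1) ^ 9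


lemma Tf_hasDeriv {x : ℝ} (hx : 1 < x) :
    HasDerivAt Tf
      (2 * x * Real.sqrt (x^2-1) *
        (1 - (x^2-1)/2 + 3*(x^2-1)^2/8 - 5*(x^2-1)^3/16)) x := by
  have h0 : (0:ℝ) < x ^ 2 - 1 := by nlinarith
  have hs : 0 < Real.sqrt (x ^ 2 - 1) := Real.sqrt_pos.2 h0
  have hsq : Real.sqrt (x ^ 2 - 1) ^ 2 = x ^ 2 - 1 := Real.sq_sqrt h0.le
  have hd := sqrt_hasDeriv hx
  have h3 := (hd.pow 3).const_mul (2/3 : ℝ)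
  have h5 := (hd.pow 5).const_mul (1/5 : ℝ)
  have h7 := (hd.pow 7).const_mul (3/28 : ℝ)
  have h9 := (hd.pow 9).const_mul (5/72 : ℝ)
  have h := ((h3.sub h5).add h7).sub h9
  convert h using 1
  · exact rfl
  · exact rfl
  · exact rfl
  set s := Real.sqrt (x^2-1) with hsdef
  rw [← hsq]
  field_simp
  ring


lemma keyineq {s : ℝ} (h1 : 1 ≤ s) :
    |1 - s * (1 - (s^2-1)/2 + 3*(s^2-1)^2/8 - 5*(s^2-1)^3/16)| ≤ (3/2) * (s^2-1)^4 := by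
  have ht : (0:ℝ) ≤ s - 1 := by linarith
  have h4 := pow_nonneg ht 4
  have h5 := pow_nonneg ht 5
  have h6 := pow_nonneg ht 6
  have h7 := pow_nonneg ht 7
  have h8 := pow_nonneg ht 8
  rw [abs_le]
  constructor <;> nlinarith [h4, h5, h6, h7, h8]

lemma qineq {s : ℝ} (h1 : 1 ≤ s) :
    |s - (1 + (s^2-1)/2 - (s^2-1)^2/8 + (s^2-1)^3/16)| ≤ (s^2-1)^4 := by
  have ht : (0:ℝ) ≤ s - 1 := by linarith
  have h4 := pow_nonneg ht 4
  have h5 := pow_nonneg ht 5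
  have h6 := pow_nonneg ht 6
  have h7 := pow_nonneg ht 7
  have h8 := pow_nonneg ht 8
  rw [abs_le]
  constructor <;> nlinarith [h4, h5, h6, h7, h8]

lemma FfTf_cont : ContinuousAt (fun y => Ff y - Tf y) 1 := by
  have hsq : Continuous fun y : ℝ => Real.sqrt (y ^ 2 - 1) := by fun_prop
  have h1 : ContinuousAt _root_.arcosh 1 := by
    apply ContinuousAt.log
    · exact (continuous_id.add hsq).continuousAt
    · norm_num
  apply ContinuousAt.sub
  · exact ((continuous_id.mul hsq).continuousAt).sub h1
  · unfold Tf; fun_prop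

lemma FfTf_one : Ff 1 - Tf 1 = 0 := by
  simp [Ff, Tf, _root_.arcosh]

lemma Ebound {x : ℝ} (hx : 1 < x) (hx2 : x ≤ 11/10) :
    |Ff x - Tf x| ≤ 3 * (x^2-1)^4 * (x - 1) := by
  set C := 3 * (x^2-1)^4 with hC
  have hu0 : (0:ℝ) < x^2-1 := by nlinarith
  -- MVT-based bound on [y, x] for 1 < y < x
  have hmvt : ∀ y, 1 < y → y ≤ x → |(Ff x - Tf x) - (Ff y - Tf y)| ≤ C * (x - y) := by
    intro y hy1 hyx
    have hder : ∀ s ∈ Set.Icc y x, HasDerivWithinAt (fun t => Ff t - Tf t)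
        (2 * Real.sqrt (s^2-1) * (1 - (1 * s) * (1 - (s^2-1)/2 + 3*(s^2-1)^2/8 - 5*(s^2-1)^3/16)))
        (Set.Icc y x) s := by
      intro s hs
      have hs1 : 1 < s := lt_of_lt_of_le hy1 hs.1
      have := (Ff_hasDeriv hs1).sub (Tf_hasDeriv hs1)
      refine HasDerivAt.hasDerivWithinAt ?_
      convert this using 1
      · exact rfl
      ring
    have hbnd : ∀ s ∈ Set.Icc y x, ‖(2 * Real.sqrt (s^2-1) *
        (1 - (1 * s) * (1 - (s^2-1)/2 + 3*(s^2-1)^2/8 - 5*(s^2-1)^3/16)))‖ ≤ C := by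
      intro s hs
      have hs1 : 1 < s := lt_of_lt_of_le hy1 hs.1
      have hsx : s ≤ x := hs.2
      have hus : (0:ℝ) < s^2-1 := by nlinarith
      have husx : s^2-1 ≤ x^2-1 := by nlinarith
      have hsqle : Real.sqrt (s^2-1) ≤ 1 := by
        have h := Real.sqrt_le_sqrt (show s^2-1 ≤ 1 by nlinarith)
        simpa using h
      have hkey := keyineq (le_of_lt hs1)
      rw [Real.norm_eq_abs, abs_mul, one_mul]
      have h1 : |2 * Real.sqrt (s^2-1)| = 2 * Real.sqrt (s^2-1) := by
        rw [abs_of_nonneg]; positivity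
      rw [h1]
      have h2 : 2 * Real.sqrt (s^2-1) ≤ 2 := by linarith
      have h3 : |1 - s * (1 - (s^2-1)/2 + 3*(s^2-1)^2/8 - 5*(s^2-1)^3/16)| ≤ (3/2)*(s^2-1)^4 :=
        hkey
      calc 2 * Real.sqrt (s^2-1) * |1 - s * (1 - (s^2-1)/2 + 3*(s^2-1)^2/8 - 5*(s^2-1)^3/16)|
          ≤ 2 * ((3/2)*(s^2-1)^4) := by
            apply mul_le_mul h2 h3 (abs_nonneg _)
            norm_num
        _ ≤ C := by
            rw [hC]
            nlinarith [pow_le_pow_left₀ hus.le husx 4]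
    have hconv : Convex ℝ (Set.Icc y x) := convex_Icc _ _
    have hxm : x ∈ Set.Icc y x := ⟨hyx, le_refl x⟩
    have hym : y ∈ Set.Icc y x := ⟨le_refl y, hyx⟩
    have := hconv.norm_image_sub_le_of_norm_hasDerivWithin_le hder hbnd hym hxm
    rw [Real.norm_eq_abs, Real.norm_eq_abs] at this
    calc |Ff x - Tf x - (Ff y - Tf y)| ≤ C * |x - y| := this
      _ = C * (x - y) := by rw [abs_of_nonneg (by linarith)]
  -- take y → 1⁺
  have hne : (nhdsWithin (1:ℝ) (Set.Ioi 1)).NeBot := nhdsGT_neBot 1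
  have hlim0 : Tendsto (fun y => Ff y - Tf y) (nhdsWithin 1 (Set.Ioi 1)) (nhds 0) := by
    have h := FfTf_cont.tendsto.mono_left
      (nhdsWithin_le_nhds (s := Set.Ioi (1:ℝ)))
    rwa [FfTf_one] at h
  have t1 : Tendsto (fun y => |(Ff x - Tf x) - (Ff y - Tf y)|)
      (nhdsWithin 1 (Set.Ioi 1)) (nhds |Ff x - Tf x|) := by
    have := (tendsto_const_nhds (x := Ff x - Tf x)
      (f := nhdsWithin (1:ℝ) (Set.Ioi 1))).sub hlim0
    simpa using this.abs
  have t2 : Tendsto (fun y : ℝ => C * (x - y)) (nhdsWithin 1 (Set.Ioi 1))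
      (nhds (C * (x - 1))) := by
    have hy : Tendsto (fun y : ℝ => y) (nhdsWithin 1 (Set.Ioi 1)) (nhds 1) :=
      tendsto_id.mono_left nhdsWithin_le_nhds
    exact (tendsto_const_nhds.sub hy).const_mul C
  have hev : ∀ᶠ y in nhdsWithin (1:ℝ) (Set.Ioi 1),
      |(Ff x - Tf x) - (Ff y - Tf y)| ≤ C * (x - y) := by
    filter_upwards [Ioo_mem_nhdsGT_of_mem (Set.mem_Ico.2 ⟨le_refl 1, hx⟩)] with y hy
    exact hmvt y hy.1 hy.2.le
  exact le_of_tendsto_of_tendsto t1 t2 hev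

noncomputable def gf (x : ℝ) : ℝ := Ff x / ((x ^ 2 - 1) * Real.sqrt (x ^ 2 - 1))

lemma gbound {x : ℝ} (hx : 1 < x) (hx2 : x ≤ 11/10) :
    |gf x - (2/3 - (x^2-1)/5 + 3*(x^2-1)^2/28 - 5*(x^2-1)^3/72)|
      ≤ 3 * (x^2-1)^3 * Real.sqrt (x^2-1) := by
  have hu0 : (0:ℝ) < x^2-1 := by nlinarith
  have hs0 : 0 < Real.sqrt (x^2-1) := Real.sqrt_pos.2 hu0
  have hsq : Real.sqrt (x^2-1) ^ 2 = x^2-1 := Real.sq_sqrt hu0.le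
  have hT : Tf x = (x^2-1) * Real.sqrt (x^2-1) * (2/3 - (x^2-1)/5 + 3*(x^2-1)^2/28 - 5*(x^2-1)^3/72) := by
    unfold Tf
    set s := Real.sqrt (x^2-1) with hsdef
    rw [← hsq]
    ring
  have hdiff : gf x - (2/3 - (x^2-1)/5 + 3*(x^2-1)^2/28 - 5*(x^2-1)^3/72)
      = (Ff x - Tf x) / ((x^2-1) * Real.sqrt (x^2-1)) := by
    rw [gf, hT]
    field_simp
  rw [hdiff, abs_div]
  have hden : |(x^2-1) * Real.sqrt (x^2-1)| = (x^2-1) * Real.sqrt (x^2-1) := by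
    rw [abs_of_nonneg]; positivity
  rw [hden]
  rw [div_le_iff₀ (by positivity)]
  have hE := Ebound hx hx2
  calc |Ff x - Tf x| ≤ 3 * (x^2-1)^4 * (x-1) := hE
    _ ≤ 3 * (x^2-1)^4 * (x^2-1) := by
        nlinarith [mul_nonneg (pow_nonneg hu0.le 4) (show (0:ℝ) ≤ x^2 - x by nlinarith)]
    _ = 3 * (x^2-1)^3 * Real.sqrt (x^2-1) * ((x^2-1) * Real.sqrt (x^2-1)) := by
        set s := Real.sqrt (x^2-1) with hsdef
        rw [← hsq]; ring

lemma grange {x : ℝ} (hx : 1 < x) (hx2 : x ≤ 11/10) :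
    1/2 ≤ gf x ∧ gf x ≤ 1 := by
  have hu0 : (0:ℝ) < x^2-1 := by nlinarith
  have hu1 : x^2-1 ≤ 21/100 := by nlinarith
  have hs0 : 0 < Real.sqrt (x^2-1) := Real.sqrt_pos.2 hu0
  have hs1 : Real.sqrt (x^2-1) ≤ 1/2 := by
    have h := Real.sqrt_le_sqrt (show x^2-1 ≤ 1/4 by nlinarith)
    have h4 : Real.sqrt (1/4 : ℝ) = 1/2 := by
      rw [show (1/4:ℝ) = (1/2)^2 by norm_num, Real.sqrt_sq (by norm_num)]
    linarith [h4 ▸ h]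
  have hb := gbound hx hx2
  rw [abs_le] at hb
  have hcube : (x^2-1)^3 ≤ (21/100)^3 := by
    apply pow_le_pow_left₀ hu0.le hu1
  have hsmall : 3 * (x^2-1)^3 * Real.sqrt (x^2-1) ≤ 3 * (21/100)^3 * (1/2) := by
    have := mul_le_mul (mul_le_mul_of_nonneg_left hcube (by norm_num : (0:ℝ) ≤ 3)) hs1
      hs0.le (by positivity)
    linarith [this]
  constructor <;> nlinarith [hb.1, hb.2, hu0, hu1, sq_nonneg (x^2-1), pow_nonneg hu0.le 2, pow_nonneg hu0.le 3, hcube]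

lemma a1_eq {x : ℝ} (hx : 1 < x) (hg : 0 < gf x) :
    a1 x = (1/1152) * (((145 + 249*x^2 - 9*x^4) * gf x ^ 2
      - 28/3 * x * (x^2 - 6) * gf x - 1820/9) / (x^2-1)^3 / gf x ^ 2) := by
  have hu0 : (0:ℝ) < x^2-1 := by nlinarith
  have hs0 : 0 < Real.sqrt (x^2-1) := Real.sqrt_pos.2 hu0
  have hsq : Real.sqrt (x^2-1) ^ 2 = x^2-1 := Real.sq_sqrt hu0.le
  have hF : Ff x = (x^2-1) * Real.sqrt (x^2-1) * gf x := by
    rw [gf]; field_simp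
  have hFpos : 0 < Ff x := by rw [hF]; positivity
  have hB : 0 < (3:ℝ)/4 * Ff x := by linarith
  have hzeta : zeta x = ((3:ℝ)/4 * Ff x) ^ ((2:ℝ)/3) := rfl
  have h32 : zeta x ^ ((3:ℝ)/2) = (3:ℝ)/4 * Ff x := by
    rw [hzeta, ← Real.rpow_mul hB.le]
    norm_num
  have h3 : zeta x ^ (3:ℕ) = ((3:ℝ)/4 * Ff x) ^ (2:ℕ) := by
    rw [hzeta, ← Real.rpow_natCast (((3:ℝ)/4 * Ff x) ^ ((2:ℝ)/3)) 3,
      ← Real.rpow_mul hB.le]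
    rw [show (2:ℝ)/3 * (3:ℕ) = ((2:ℕ):ℝ) by norm_num, Real.rpow_natCast]
  have hu32 : (x^2-1) ^ ((3:ℝ)/2) = (x^2-1) * Real.sqrt (x^2-1) := by
    rw [show (3:ℝ)/2 = 1 + 1/2 by norm_num, Real.rpow_add hu0, Real.rpow_one,
      ← Real.sqrt_eq_rpow]
  rw [a1, h32, h3, hu32, hF]
  set s := Real.sqrt (x^2-1) with hsdef
  rw [← hsq]
  have hgne : gf x ≠ 0 := hg.ne'
  field_simp
  ring

lemma hRid (x : ℝ) :
    (145 + 249*x^2 - 9*x^4) * (2/3 - (x^2-1)/5 + 3*(x^2-1)^2/28 - 5*(x^2-1)^3/72)^2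
      - 28/3 * (1 + (x^2-1)/2 - (x^2-1)^2/8 + (x^2-1)^3/16) * ((x^2-1) - 5)
        * (2/3 - (x^2-1)/5 + 3*(x^2-1)^2/28 - 5*(x^2-1)^3/72) - 1820/9
    = (x^2-1)^3 * (-332/75 + (x^2-1) * (-532307/25200 + 701/120*(x^2-1)
        - 579209/254016*(x^2-1)^2 + 5195/4032*(x^2-1)^3 - 25/576*(x^2-1)^4)) := by
  ring

lemma hdec (x g : ℝ) :
    ((145 + 249*x^2 - 9*x^4) * g^2 - 28/3 * x * (x^2-6) * g - 1820/9)
      - ((145 + 249*x^2 - 9*x^4) * (2/3 - (x^2-1)/5 + 3*(x^2-1)^2/28 - 5*(x^2-1)^3/72)^2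
        - 28/3 * (1 + (x^2-1)/2 - (x^2-1)^2/8 + (x^2-1)^3/16) * ((x^2-1) - 5)
          * (2/3 - (x^2-1)/5 + 3*(x^2-1)^2/28 - 5*(x^2-1)^3/72) - 1820/9)
    = (g - (2/3 - (x^2-1)/5 + 3*(x^2-1)^2/28 - 5*(x^2-1)^3/72))
        * ((145 + 249*x^2 - 9*x^4) * (g + (2/3 - (x^2-1)/5 + 3*(x^2-1)^2/28 - 5*(x^2-1)^3/72))
          - 28/3 * ((x^2-1) - 5) * x)
      - (x - (1 + (x^2-1)/2 - (x^2-1)^2/8 + (x^2-1)^3/16))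
        * (28/3 * ((x^2-1) - 5) * (2/3 - (x^2-1)/5 + 3*(x^2-1)^2/28 - 5*(x^2-1)^3/72)) := by
  ring



lemma errbound {x : ℝ} (hx : 1 < x) (hx2 : x ≤ 11/10) :
    |((145 + 249*x^2 - 9*x^4) * gf x ^ 2 - 28/3 * x * (x^2-6) * gf x - 1820/9)
      - ((145 + 249*x^2 - 9*x^4) * (2/3 - (x^2-1)/5 + 3*(x^2-1)^2/28 - 5*(x^2-1)^3/72)^2
        - 28/3 * (1 + (x^2-1)/2 - (x^2-1)^2/8 + (x^2-1)^3/16) * ((x^2-1) - 5)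
          * (2/3 - (x^2-1)/5 + 3*(x^2-1)^2/28 - 5*(x^2-1)^3/72) - 1820/9)|
    ≤ 4000 * (x^2-1)^3 * Real.sqrt (x^2-1) := by
  have hgr := grange hx hx2
  have ha := gbound hx hx2
  have hbq := qineq (le_of_lt hx)
  have hu0 : (0:ℝ) < x^2-1 := by nlinarith
  have hu1 : x^2-1 ≤ 21/100 := by nlinarith
  have hs0 : 0 < Real.sqrt (x^2-1) := Real.sqrt_pos.2 hu0
  have hs1 : Real.sqrt (x^2-1) ≤ 1/2 := by
    have h := Real.sqrt_le_sqrt (show x^2-1 ≤ 1/4 by nlinarith)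
    have h4 : Real.sqrt (1/4 : ℝ) = 1/2 := by
      rw [show (1/4:ℝ) = (1/2)^2 by norm_num, Real.sqrt_sq (by norm_num)]
    linarith [h4 ▸ h]
  have hsq : Real.sqrt (x^2-1) ^ 2 = x^2-1 := Real.sq_sqrt hu0.le
  have hus : (x^2-1)^3 * Real.sqrt (x^2-1) ^ 2 = (x^2-1)^4 := by rw [hsq]; ring
  have hb : |x - (1 + (x^2-1)/2 - (x^2-1)^2/8 + (x^2-1)^3/16)|
      ≤ (x^2-1)^3 * Real.sqrt (x^2-1) := by
    refine le_trans hbq ?_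
    nlinarith [mul_nonneg (pow_nonneg hu0.le 3)
      (mul_nonneg hs0.le (show (0:ℝ) ≤ 1 - Real.sqrt (x^2-1) by linarith)), hus]
  have hPl : (0:ℝ) ≤ 145 + 249*x^2 - 9*x^4 := by nlinarith
  have hPu : 145 + 249*x^2 - 9*x^4 ≤ 500 := by nlinarith
  have hGl : (0:ℝ) ≤ 2/3 - (x^2-1)/5 + 3*(x^2-1)^2/28 - 5*(x^2-1)^3/72 := by nlinarith
  have hGu : 2/3 - (x^2-1)/5 + 3*(x^2-1)^2/28 - 5*(x^2-1)^3/72 ≤ 1 := by nlinarith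
  have hsum1 : (0:ℝ) ≤ gf x + (2/3 - (x^2-1)/5 + 3*(x^2-1)^2/28 - 5*(x^2-1)^3/72) := by
    linarith [hgr.1]
  have hsum2 : gf x + (2/3 - (x^2-1)/5 + 3*(x^2-1)^2/28 - 5*(x^2-1)^3/72) ≤ 2 := by
    linarith [hgr.2]
  have hprod1 : (145 + 249*x^2 - 9*x^4) * (gf x + (2/3 - (x^2-1)/5 + 3*(x^2-1)^2/28
      - 5*(x^2-1)^3/72)) ≤ 1000 := by
    calc (145 + 249*x^2 - 9*x^4) * (gf x + (2/3 - (x^2-1)/5 + 3*(x^2-1)^2/28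
        - 5*(x^2-1)^3/72)) ≤ 500 * 2 := mul_le_mul hPu hsum2 hsum1 (by norm_num)
      _ = 1000 := by norm_num
  have hprod0 : (0:ℝ) ≤ (145 + 249*x^2 - 9*x^4) * (gf x + (2/3 - (x^2-1)/5
      + 3*(x^2-1)^2/28 - 5*(x^2-1)^3/72)) := mul_nonneg hPl hsum1
  have hM : |(145 + 249*x^2 - 9*x^4) * (gf x + (2/3 - (x^2-1)/5 + 3*(x^2-1)^2/28
      - 5*(x^2-1)^3/72)) - 28/3 * ((x^2-1) - 5) * x| ≤ 1100 := by
    rw [abs_le]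
    constructor <;> nlinarith [hx, hx2, hu0, hu1, hprod0, hprod1]
  have hN : |28/3 * ((x^2-1) - 5) * (2/3 - (x^2-1)/5 + 3*(x^2-1)^2/28 - 5*(x^2-1)^3/72)|
      ≤ 50 := by
    rw [abs_le]
    constructor <;> nlinarith [hu0, hu1, hGl, hGu]
  rw [hdec x (gf x)]
  have h1 := mul_le_mul ha hM (abs_nonneg _) (by positivity)
  have h2 := mul_le_mul hb hN (abs_nonneg _) (by positivity)
  calc |(gf x - (2/3 - (x^2-1)/5 + 3*(x^2-1)^2/28 - 5*(x^2-1)^3/72))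
        * ((145 + 249*x^2 - 9*x^4) * (gf x + (2/3 - (x^2-1)/5 + 3*(x^2-1)^2/28
          - 5*(x^2-1)^3/72)) - 28/3 * ((x^2-1) - 5) * x)
      - (x - (1 + (x^2-1)/2 - (x^2-1)^2/8 + (x^2-1)^3/16))
        * (28/3 * ((x^2-1) - 5) * (2/3 - (x^2-1)/5 + 3*(x^2-1)^2/28 - 5*(x^2-1)^3/72))|
      ≤ |(gf x - (2/3 - (x^2-1)/5 + 3*(x^2-1)^2/28 - 5*(x^2-1)^3/72))
        * ((145 + 249*x^2 - 9*x^4) * (gf x + (2/3 - (x^2-1)/5 + 3*(x^2-1)^2/28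
          - 5*(x^2-1)^3/72)) - 28/3 * ((x^2-1) - 5) * x)|
      + |(x - (1 + (x^2-1)/2 - (x^2-1)^2/8 + (x^2-1)^3/16))
        * (28/3 * ((x^2-1) - 5) * (2/3 - (x^2-1)/5 + 3*(x^2-1)^2/28 - 5*(x^2-1)^3/72))| :=
      abs_sub _ _
    _ ≤ (3 * (x^2-1)^3 * Real.sqrt (x^2-1)) * 1100 + ((x^2-1)^3 * Real.sqrt (x^2-1)) * 50 := by
      rw [abs_mul, abs_mul]
      exact add_le_add h1 h2
    _ ≤ 4000 * (x^2-1)^3 * Real.sqrt (x^2-1) := by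
      nlinarith [mul_nonneg (pow_nonneg hu0.le 3) hs0.le]

theorem tendsto_a1_one :
    Tendsto a1 (nhdsWithin 1 (Set.Ioi 1)) (nhds (-249 / 28800)) := by
  have hmem : Set.Ioo (1:ℝ) (11/10) ∈ nhdsWithin (1:ℝ) (Set.Ioi 1) :=
    Ioo_mem_nhdsGT_of_mem (Set.mem_Ico.2 ⟨le_refl 1, by norm_num⟩)
  have hs : Tendsto (fun x : ℝ => Real.sqrt (x^2-1)) (nhdsWithin 1 (Set.Ioi 1)) (nhds 0) := by
    have hc : ContinuousAt (fun x : ℝ => Real.sqrt (x^2-1)) 1 := by fun_prop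
    have h := hc.tendsto.mono_left (nhdsWithin_le_nhds (s := Set.Ioi (1:ℝ)))
    simpa using h
  have hGp : Tendsto (fun x : ℝ => 2/3 - (x^2-1)/5 + 3*(x^2-1)^2/28 - 5*(x^2-1)^3/72)
      (nhdsWithin 1 (Set.Ioi 1)) (nhds (2/3)) := by
    have hc : ContinuousAt (fun x : ℝ => 2/3 - (x^2-1)/5 + 3*(x^2-1)^2/28 - 5*(x^2-1)^3/72) 1 := by
      fun_prop
    have h := hc.tendsto.mono_left (nhdsWithin_le_nhds (s := Set.Ioi (1:ℝ)))
    convert h using 2 <;> norm_num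
  have hgdiff : Tendsto (fun x => gf x - (2/3 - (x^2-1)/5 + 3*(x^2-1)^2/28 - 5*(x^2-1)^3/72))
      (nhdsWithin 1 (Set.Ioi 1)) (nhds 0) := by
    have hle : ∀ᶠ x in nhdsWithin (1:ℝ) (Set.Ioi 1),
        ‖gf x - (2/3 - (x^2-1)/5 + 3*(x^2-1)^2/28 - 5*(x^2-1)^3/72)‖
          ≤ 3 * (x^2-1)^3 * Real.sqrt (x^2-1) := by
      filter_upwards [hmem] with x hx
      simpa [Real.norm_eq_abs] using gbound hx.1 hx.2.le
    refine squeeze_zero_norm' hle ?_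
    have hc : Tendsto (fun x : ℝ => 3 * (x^2-1)^3) (nhdsWithin 1 (Set.Ioi 1)) (nhds 0) := by
      have hc2 : ContinuousAt (fun x : ℝ => 3 * (x^2-1)^3) 1 := by fun_prop
      have h := hc2.tendsto.mono_left (nhdsWithin_le_nhds (s := Set.Ioi (1:ℝ)))
      simpa using h
    simpa using hc.mul hs
  have hgf : Tendsto gf (nhdsWithin 1 (Set.Ioi 1)) (nhds (2/3)) := by
    have h2 := hgdiff.add hGp
    simpa using h2
  have hQ : Tendsto (fun x => ((145 + 249*x^2 - 9*x^4) * gf x ^ 2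
      - 28/3 * x * (x^2-6) * gf x - 1820/9) / (x^2-1)^3)
      (nhdsWithin 1 (Set.Ioi 1)) (nhds (-332/75)) := by
    have hev : (fun x => ((145 + 249*x^2 - 9*x^4) * gf x ^ 2
        - 28/3 * x * (x^2-6) * gf x - 1820/9) / (x^2-1)^3)
        =ᶠ[nhdsWithin (1:ℝ) (Set.Ioi 1)]
        (fun x => (-332/75 + (x^2-1) * (-532307/25200 + 701/120*(x^2-1)
          - 579209/254016*(x^2-1)^2 + 5195/4032*(x^2-1)^3 - 25/576*(x^2-1)^4))
          + (((145 + 249*x^2 - 9*x^4) * gf x ^ 2 - 28/3 * x * (x^2-6) * gf x - 1820/9)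
            - ((145 + 249*x^2 - 9*x^4) * (2/3 - (x^2-1)/5 + 3*(x^2-1)^2/28 - 5*(x^2-1)^3/72)^2
              - 28/3 * (1 + (x^2-1)/2 - (x^2-1)^2/8 + (x^2-1)^3/16) * ((x^2-1) - 5)
                * (2/3 - (x^2-1)/5 + 3*(x^2-1)^2/28 - 5*(x^2-1)^3/72) - 1820/9)) / (x^2-1)^3) := by
      filter_upwards [hmem] with x hx
      have hu0 : (0:ℝ) < x^2-1 := by nlinarith [hx.1]
      have hune : ((x:ℝ)^2-1)^3 ≠ 0 := pow_ne_zero 3 hu0.ne'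
      have key : (-332/75 + (x^2-1) * (-532307/25200 + 701/120*(x^2-1)
            - 579209/254016*(x^2-1)^2 + 5195/4032*(x^2-1)^3 - 25/576*(x^2-1)^4))
          + (((145 + 249*x^2 - 9*x^4) * gf x ^ 2 - 28/3 * x * (x^2-6) * gf x - 1820/9)
            - ((145 + 249*x^2 - 9*x^4) * (2/3 - (x^2-1)/5 + 3*(x^2-1)^2/28 - 5*(x^2-1)^3/72)^2
              - 28/3 * (1 + (x^2-1)/2 - (x^2-1)^2/8 + (x^2-1)^3/16) * ((x^2-1) - 5)
                * (2/3 - (x^2-1)/5 + 3*(x^2-1)^2/28 - 5*(x^2-1)^3/72) - 1820/9)) / (x^2-1)^3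
          = ((-332/75 + (x^2-1) * (-532307/25200 + 701/120*(x^2-1)
            - 579209/254016*(x^2-1)^2 + 5195/4032*(x^2-1)^3 - 25/576*(x^2-1)^4)) * (x^2-1)^3
          + (((145 + 249*x^2 - 9*x^4) * gf x ^ 2 - 28/3 * x * (x^2-6) * gf x - 1820/9)
            - ((145 + 249*x^2 - 9*x^4) * (2/3 - (x^2-1)/5 + 3*(x^2-1)^2/28 - 5*(x^2-1)^3/72)^2
              - 28/3 * (1 + (x^2-1)/2 - (x^2-1)^2/8 + (x^2-1)^3/16) * ((x^2-1) - 5)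
                * (2/3 - (x^2-1)/5 + 3*(x^2-1)^2/28 - 5*(x^2-1)^3/72) - 1820/9))) / (x^2-1)^3 := by
        rw [add_div, mul_div_cancel_right₀ _ hune]
      rw [key]
      congr 1
      linear_combination hRid x
    rw [tendsto_congr' hev]
    have h1 : Tendsto (fun x : ℝ => -332/75 + (x^2-1) * (-532307/25200 + 701/120*(x^2-1)
        - 579209/254016*(x^2-1)^2 + 5195/4032*(x^2-1)^3 - 25/576*(x^2-1)^4))
        (nhdsWithin 1 (Set.Ioi 1)) (nhds (-332/75)) := by
      have hc : ContinuousAt (fun x : ℝ => -332/75 + (x^2-1) * (-532307/25200 + 701/120*(x^2-1)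
          - 579209/254016*(x^2-1)^2 + 5195/4032*(x^2-1)^3 - 25/576*(x^2-1)^4)) 1 := by fun_prop
      have h := hc.tendsto.mono_left (nhdsWithin_le_nhds (s := Set.Ioi (1:ℝ)))
      convert h using 2 <;> norm_num
    have h2 : Tendsto (fun x => (((145 + 249*x^2 - 9*x^4) * gf x ^ 2
        - 28/3 * x * (x^2-6) * gf x - 1820/9)
        - ((145 + 249*x^2 - 9*x^4) * (2/3 - (x^2-1)/5 + 3*(x^2-1)^2/28 - 5*(x^2-1)^3/72)^2
          - 28/3 * (1 + (x^2-1)/2 - (x^2-1)^2/8 + (x^2-1)^3/16) * ((x^2-1) - 5)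
            * (2/3 - (x^2-1)/5 + 3*(x^2-1)^2/28 - 5*(x^2-1)^3/72) - 1820/9)) / (x^2-1)^3)
        (nhdsWithin 1 (Set.Ioi 1)) (nhds 0) := by
      have hle : ∀ᶠ x in nhdsWithin (1:ℝ) (Set.Ioi 1),
          ‖(((145 + 249*x^2 - 9*x^4) * gf x ^ 2 - 28/3 * x * (x^2-6) * gf x - 1820/9)
            - ((145 + 249*x^2 - 9*x^4) * (2/3 - (x^2-1)/5 + 3*(x^2-1)^2/28 - 5*(x^2-1)^3/72)^2
              - 28/3 * (1 + (x^2-1)/2 - (x^2-1)^2/8 + (x^2-1)^3/16) * ((x^2-1) - 5)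
                * (2/3 - (x^2-1)/5 + 3*(x^2-1)^2/28 - 5*(x^2-1)^3/72) - 1820/9)) / (x^2-1)^3‖
            ≤ 4000 * Real.sqrt (x^2-1) := by
        filter_upwards [hmem] with x hx
        have hu0 : (0:ℝ) < x^2-1 := by nlinarith [hx.1]
        have herr := errbound hx.1 hx.2.le
        rw [Real.norm_eq_abs, abs_div, abs_of_nonneg (by positivity : (0:ℝ) ≤ ((x:ℝ)^2-1)^3),
          div_le_iff₀ (by positivity)]
        calc |((145 + 249*x^2 - 9*x^4) * gf x ^ 2 - 28/3 * x * (x^2-6) * gf x - 1820/9)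
            - ((145 + 249*x^2 - 9*x^4) * (2/3 - (x^2-1)/5 + 3*(x^2-1)^2/28 - 5*(x^2-1)^3/72)^2
              - 28/3 * (1 + (x^2-1)/2 - (x^2-1)^2/8 + (x^2-1)^3/16) * ((x^2-1) - 5)
                * (2/3 - (x^2-1)/5 + 3*(x^2-1)^2/28 - 5*(x^2-1)^3/72) - 1820/9)|
            ≤ 4000 * (x^2-1)^3 * Real.sqrt (x^2-1) := herr
          _ = 4000 * Real.sqrt (x^2-1) * (x^2-1)^3 := by ring
      refine squeeze_zero_norm' hle ?_
      simpa using hs.const_mul (4000:ℝ)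
    have h3 := h1.add h2
    simpa using h3
  have hdiv : Tendsto (fun x => ((145 + 249*x^2 - 9*x^4) * gf x ^ 2
      - 28/3 * x * (x^2-6) * gf x - 1820/9) / (x^2-1)^3 / gf x ^ 2)
      (nhdsWithin 1 (Set.Ioi 1)) (nhds (-332/75 / (2/3)^2)) :=
    hQ.div (hgf.pow 2) (by norm_num)
  have hfinal : Tendsto (fun x => (1/1152 : ℝ) * (((145 + 249*x^2 - 9*x^4) * gf x ^ 2
      - 28/3 * x * (x^2-6) * gf x - 1820/9) / (x^2-1)^3 / gf x ^ 2))
      (nhdsWithin 1 (Set.Ioi 1)) (nhds ((1/1152 : ℝ) * (-332/75 / (2/3)^2))) :=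
    hdiv.const_mul _
  have hcong : (fun x => (1/1152 : ℝ) * (((145 + 249*x^2 - 9*x^4) * gf x ^ 2
      - 28/3 * x * (x^2-6) * gf x - 1820/9) / (x^2-1)^3 / gf x ^ 2))
      =ᶠ[nhdsWithin (1:ℝ) (Set.Ioi 1)] a1 := by
    filter_upwards [hmem] with x hx
    have hg : 0 < gf x := lt_of_lt_of_le (by norm_num) (grange hx.1 hx.2.le).1
    exact (a1_eq hx.1 hg).symm
  have hT := hfinal.congr' hcong
  rwa [show ((1/1152 : ℝ) * (-332/75 / (2/3)^2)) = -249/28800 by norm_num] at hT
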